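/- Let n ≥ 1, let x₁, …, xₙ be real numbers with |x_i| ≤ B for all i, and set S(m) := Σ_{i=1}^{m} x_i (with S(0) = 0). Let 0 < t ≤ 1 and s ∈ [0, t], and put j := ⌊s·n⌋ and k := ⌊t·n⌋, assuming k ≥ 1. Then | Σ_{i=1}^{j} ( x_i − (1/k)·Σ_{ℓ=1}^{k} x_ℓ ) − ( S(j) − (s/t)·S(k) ) | ≤ B; equivalently, |j/k − s/t| · |S(k)| ≤ B. -/

import Mathlib

/-- Deterministic approximation bound from the proof of Proposition 1: the discrete centered
partial sum at `j = ⌊s·n⌋`, normalized at `k = ⌊t·n⌋`, differs from its continuous-time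
analogue by at most the bound `B` on the summands; equivalently `|j/k − s/t|·|S(k)| ≤ B`. -/
theorem stmt_7 (n : ℕ) (hn : 1 ≤ n) (x : ℕ → ℝ) (B : ℝ)
    (hx : ∀ i ∈ Finset.Icc 1 n, |x i| ≤ B)
    (t s : ℝ) (ht0 : 0 < t) (ht1 : t ≤ 1) (hs : s ∈ Set.Icc (0 : ℝ) t)
    (S : ℕ → ℝ) (hS : ∀ m, S m = ∑ i ∈ Finset.Icc 1 m, x i)
    (j k : ℕ) (hj : j = ⌊s * (n : ℝ)⌋₊) (hk : k = ⌊t * (n : ℝ)⌋₊) (hk1 : 1 ≤ k) :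
    |(∑ i ∈ Finset.Icc 1 j, (x i - (1 / (k : ℝ)) * ∑ l ∈ Finset.Icc 1 k, x l))
        - (S j - s / t * S k)| ≤ B
      ∧ |(j : ℝ) / (k : ℝ) - s / t| * |S k| ≤ B := by
  have hs0 : 0 ≤ s := hs.1
  have hst : s ≤ t := hs.2
  have hkpos : (0 : ℝ) < (k : ℝ) := by exact_mod_cast hk1
  have hkn : k ≤ n := by
    rw [hk]
    calc ⌊t * (n : ℝ)⌋₊ ≤ ⌊(n : ℝ)⌋₊ := by
          apply Nat.floor_le_floor
          nlinarith [(Nat.cast_pos (α := ℝ)).mpr hn]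
      _ = n := Nat.floor_natCast n
  have hB0 : 0 ≤ B := le_trans (abs_nonneg _) (hx 1 (by simp [hn]))
  -- |S k| ≤ k * B
  have hSk : |S k| ≤ (k : ℝ) * B := by
    rw [hS k]
    calc |∑ i ∈ Finset.Icc 1 k, x i| ≤ ∑ i ∈ Finset.Icc 1 k, |x i| :=
          Finset.abs_sum_le_sum_abs _ _
      _ ≤ ∑ i ∈ Finset.Icc 1 k, B := by
          apply Finset.sum_le_sum
          intro i hi
          exact hx i (Finset.mem_Icc.mpr ⟨(Finset.mem_Icc.mp hi).1,
            le_trans (Finset.mem_Icc.mp hi).2 hkn⟩)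
      _ = (k : ℝ) * B := by
          rw [Finset.sum_const, Nat.card_Icc]
          simp
  -- |j - (s/t)*k| ≤ 1
  have ht0' : t ≠ 0 := ne_of_gt ht0
  have ha0 : 0 ≤ s / t := div_nonneg hs0 ht0.le
  have ha1 : s / t ≤ 1 := (div_le_one ht0).mpr hst
  have hjle : (j : ℝ) ≤ s * n := by
    rw [hj]; exact Nat.floor_le (by positivity)
  have hjgt : s * n < (j : ℝ) + 1 := by
    rw [hj]; exact Nat.lt_floor_add_one _
  have hkle : (k : ℝ) ≤ t * n := by
    rw [hk]; exact Nat.floor_le (by positivity)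
  have hkgt : t * n < (k : ℝ) + 1 := by
    rw [hk]; exact Nat.lt_floor_add_one _
  have hak_le : s / t * k ≤ s * n := by
    calc s / t * k ≤ s / t * (t * n) := by nlinarith
      _ = s * n := by field_simp
  have hak_ge : s * n ≤ s / t * k + 1 := by
    have : s / t * (t * n) ≤ s / t * ((k : ℝ) + 1) := by nlinarith
    have h2 : s / t * (t * n) = s * n := by field_simp
    nlinarith
  have hkey : |(j : ℝ) - s / t * k| ≤ 1 := by
    rw [abs_sub_le_iff]
    constructor <;> nlinarith
  -- |j/k - s/t| ≤ 1/k
  have hdiv : |(j : ℝ) / k - s / t| ≤ 1 / k := by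
    have hne : (k : ℝ) ≠ 0 := ne_of_gt hkpos
    have : (j : ℝ) / k - s / t = ((j : ℝ) - s / t * k) / k := by field_simp
    rw [this, abs_div, abs_of_pos hkpos]
    gcongr
  -- second part
  have h2 : |(j : ℝ) / (k : ℝ) - s / t| * |S k| ≤ B := by
    calc |(j : ℝ) / k - s / t| * |S k| ≤ (1 / k) * ((k : ℝ) * B) := by
          apply mul_le_mul hdiv hSk (abs_nonneg _) (by positivity)
      _ = B := by field_simp
  refine ⟨?_, h2⟩
  have hsum : (∑ i ∈ Finset.Icc 1 j, (x i - (1 / (k : ℝ)) * ∑ l ∈ Finset.Icc 1 k, x l))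
      = S j - (j : ℝ) / (k : ℝ) * S k := by
    rw [Finset.sum_sub_distrib, Finset.sum_const, Nat.card_Icc, hS j, hS k]
    simp only [Nat.add_sub_cancel, nsmul_eq_mul]
    field_simp
  rw [hsum]
  have heq : S j - (j : ℝ) / k * S k - (S j - s / t * S k) = (s / t - (j : ℝ) / k) * S k := by
    ring
  rw [heq, abs_mul, abs_sub_comm]
  exact h2
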